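/- arXiv:2207.08335 — 8 statements merged into one kernel-verified Lean document; each statement's English description precedes it below -/
import Mathlib

section
/- A function f : [0,1] → [0,1] is a trade-off function (i.e., equals T(Y,Y')(α) = inf{E[1-φ(Y')] : E[φ(Y)] ≤ α} over measurable rejection rules φ for some pair of distributions Y, Y') only if f is convex, continuous, non-increasing, and f(x) ≤ 1 - x for all x ∈ [0,1]. In particular, for any two probability distributions Y, Y', the function α ↦ T(Y,Y')(α) is convex, non-increasing, and satisfies T(Y,Y')(α) ≤ 1 - α. -/
open Finset

/-- `p` is a probability mass function on a finite type. -/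
def IsPMF {Ω : Type*} [Fintype Ω] (p : Ω → ℝ) : Prop :=
  (∀ x, 0 ≤ p x) ∧ ∑ x, p x = 1

/-- The trade-off function `T(Y,Y')(α) = inf { 1 - E[φ(Y')] : E[φ(Y)] ≤ α }`,
the infimum being over rejection rules `φ` with values in `[0,1]`. -/
noncomputable def tradeoff {Ω : Type*} [Fintype Ω] (p q : Ω → ℝ) (α : ℝ) : ℝ :=
  sInf { β | ∃ φ : Ω → ℝ, (∀ x, φ x ∈ Set.Icc (0:ℝ) 1) ∧
    (∑ x, p x * φ x) ≤ α ∧ β = 1 - ∑ x, q x * φ x }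

namespace TradeoffAux

variable {Ω : Type*} [Fintype Ω]

/-- The feasible set appearing in `tradeoff`. -/
def S (p q : Ω → ℝ) (α : ℝ) : Set ℝ :=
  { β | ∃ φ : Ω → ℝ, (∀ x, φ x ∈ Set.Icc (0:ℝ) 1) ∧
    (∑ x, p x * φ x) ≤ α ∧ β = 1 - ∑ x, q x * φ x }

lemma tradeoff_eq (p q : Ω → ℝ) (α : ℝ) : tradeoff p q α = sInf (S p q α) := rfl

lemma bddBelow_S (p q : Ω → ℝ) (hq : IsPMF q) (α : ℝ) : BddBelow (S p q α) := by
  refine ⟨0, ?_⟩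
  rintro β ⟨φ, hφ, -, rfl⟩
  have h1 : ∑ x, q x * φ x ≤ ∑ x, q x :=
    Finset.sum_le_sum fun x _ => by nlinarith [(hφ x).1, (hφ x).2, hq.1 x]
  have h2 : ∑ x, q x = 1 := hq.2
  linarith

lemma nonempty_S (p q : Ω → ℝ) {α : ℝ} (hα : 0 ≤ α) : (S p q α).Nonempty := by
  refine ⟨1, fun _ => 0, fun x => ⟨le_refl _, zero_le_one⟩, ?_, ?_⟩ <;> simp [hα]

lemma mem_S (p q : Ω → ℝ) {α : ℝ} (φ : Ω → ℝ) (hφ : ∀ x, φ x ∈ Set.Icc (0:ℝ) 1)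
    (h : (∑ x, p x * φ x) ≤ α) : 1 - ∑ x, q x * φ x ∈ S p q α :=
  ⟨φ, hφ, h, rfl⟩

lemma tradeoff_le (p q : Ω → ℝ) (hq : IsPMF q) {α : ℝ} (φ : Ω → ℝ)
    (hφ : ∀ x, φ x ∈ Set.Icc (0:ℝ) 1) (h : (∑ x, p x * φ x) ≤ α) :
    tradeoff p q α ≤ 1 - ∑ x, q x * φ x :=
  csInf_le (bddBelow_S p q hq α) (mem_S p q φ hφ h)

lemma tradeoff_antitone (p q : Ω → ℝ) (hq : IsPMF q) {α α' : ℝ} (h0 : 0 ≤ α')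
    (h : α' ≤ α) : tradeoff p q α ≤ tradeoff p q α' := by
  refine csInf_le_csInf (bddBelow_S p q hq α) (nonempty_S p q h0) ?_
  rintro β ⟨φ, hφ, hle, rfl⟩
  exact ⟨φ, hφ, hle.trans h, rfl⟩

/-- The Lipschitz-type constant. -/
noncomputable def M (p q : Ω → ℝ) : ℝ := ∑ x, q x / p x

lemma M_nonneg (p q : Ω → ℝ) (hp : IsPMF p) (hq : IsPMF q) : 0 ≤ M p q :=
  Finset.sum_nonneg fun x _ => div_nonneg (hq.1 x) (hp.1 x)

lemma ratio_le_M (p q : Ω → ℝ) (hp : IsPMF p) (hq : IsPMF q) {x : Ω} (hx : 0 < p x) :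
    q x ≤ M p q * p x := by
  have h1 : q x / p x ≤ M p q :=
    Finset.single_le_sum (f := fun x => q x / p x)
      (fun y _ => div_nonneg (hq.1 y) (hp.1 y)) (Finset.mem_univ x)
  calc q x = (q x / p x) * p x := by field_simp
  _ ≤ M p q * p x := by nlinarith

/-- Key Lipschitz bound: decreasing `α` can only increase `tradeoff` by `M * (α - α')`. -/
lemma tradeoff_lip (p q : Ω → ℝ) (hp : IsPMF p) (hq : IsPMF q) {α' α : ℝ}
    (h0 : 0 ≤ α') (h : α' ≤ α) :
    tradeoff p q α' ≤ tradeoff p q α + M p q * (α - α') := by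
  have hM := M_nonneg p q hp hq
  have key : ∀ β ∈ S p q α, tradeoff p q α' ≤ β + M p q * (α - α') := by
    rintro β ⟨φ, hφ, hle, rfl⟩
    set s : ℝ := ∑ x, p x * φ x with hs
    by_cases hcase : s ≤ α'
    · have := tradeoff_le p q hq φ hφ hcase
      nlinarith
    · push_neg at hcase
      have hspos : 0 < s := lt_of_le_of_lt h0 hcase
      set t : ℝ := α' / s with htdef
      have ht0 : 0 ≤ t := div_nonneg h0 hspos.le
      have ht1 : t ≤ 1 := (div_le_one hspos).mpr hcase.le
      set φ' : Ω → ℝ := fun x => if 0 < p x then t * φ x else φ x with hφ'def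
      have hφ'mem : ∀ x, φ' x ∈ Set.Icc (0:ℝ) 1 := by
        intro x
        simp only [hφ'def]
        split
        · exact ⟨mul_nonneg ht0 (hφ x).1, by nlinarith [(hφ x).1, (hφ x).2]⟩
        · exact hφ x
      have hsum : ∑ x, p x * φ' x = t * s := by
        rw [hs, Finset.mul_sum]
        refine Finset.sum_congr rfl fun x _ => ?_
        simp only [hφ'def]
        split_ifs with hx
        · ring
        · have : p x = 0 := le_antisymm (not_lt.mp hx) (hp.1 x)
          simp [this]
      have hts : t * s = α' := div_mul_cancel₀ α' hspos.ne'
      have hfeas : ∑ x, p x * φ' x ≤ α' := by rw [hsum, hts]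
      have h1 := tradeoff_le p q hq φ' hφ'mem hfeas
      -- now bound the difference of type II errors
      have hdiff : ∑ x, q x * φ x - ∑ x, q x * φ' x ≤ M p q * (1 - t) * s := by
        rw [← Finset.sum_sub_distrib, hs, Finset.mul_sum]
        refine Finset.sum_le_sum fun x _ => ?_
        simp only [hφ'def]
        split_ifs with hx
        · have hr := ratio_le_M p q hp hq hx
          have h3 : q x * φ x ≤ M p q * p x * φ x :=
            mul_le_mul_of_nonneg_right hr (hφ x).1
          have h4 : (1 - t) * (q x * φ x) ≤ (1 - t) * (M p q * p x * φ x) :=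
            mul_le_mul_of_nonneg_left h3 (by linarith)
          nlinarith [h4]
        · have : p x = 0 := le_antisymm (not_lt.mp hx) (hp.1 x)
          simp [this]
      have hfinal : M p q * (1 - t) * s ≤ M p q * (α - α') := by
        have : (1 - t) * s = s - α' := by rw [sub_mul, one_mul, hts]
        rw [mul_assoc, this]
        nlinarith
      nlinarith
  have hne := nonempty_S p q (h0.trans h)
  rw [tradeoff_eq p q α]
  obtain ⟨b, hb⟩ := hne
  refine le_of_forall_pos_le_add fun ε hε => ?_
  obtain ⟨β, hβmem, hβlt⟩ := exists_lt_of_csInf_lt ⟨b, hb⟩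
    (lt_add_of_pos_right (sInf (S p q α)) hε)
  calc tradeoff p q α' ≤ β + M p q * (α - α') := key β hβmem
  _ ≤ sInf (S p q α) + M p q * (α - α') + ε := by
      have : β ≤ sInf (S p q α) + ε := hβlt.le
      linarith

end TradeoffAux

open TradeoffAux in
/-- A trade-off function of any pair of distributions is convex, continuous,
non-increasing on `[0,1]`, and satisfies `T(Y,Y')(α) ≤ 1 - α`. -/
theorem tradeoff_is_tradeoff_function {Ω : Type*} [Fintype Ω]
    (p q : Ω → ℝ) (hp : IsPMF p) (hq : IsPMF q) :
    ConvexOn ℝ (Set.Icc (0:ℝ) 1) (tradeoff p q) ∧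
    ContinuousOn (tradeoff p q) (Set.Icc (0:ℝ) 1) ∧
    AntitoneOn (tradeoff p q) (Set.Icc (0:ℝ) 1) ∧
    ∀ α ∈ Set.Icc (0:ℝ) 1, tradeoff p q α ≤ 1 - α := by
  have hM := M_nonneg p q hp hq
  -- convexity
  have hconv : ConvexOn ℝ (Set.Icc (0:ℝ) 1) (tradeoff p q) := by
    refine ⟨convex_Icc 0 1, ?_⟩
    intro x hx y hy a b ha hb hab
    simp only [smul_eq_mul]
    have hmix : ∀ β1 ∈ S p q x, ∀ β2 ∈ S p q y,
        tradeoff p q (a * x + b * y) ≤ a * β1 + b * β2 := by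
      rintro β1 ⟨φ1, hφ1, hle1, rfl⟩ β2 ⟨φ2, hφ2, hle2, rfl⟩
      set φ : Ω → ℝ := fun z => a * φ1 z + b * φ2 z with hφdef
      have hmem : ∀ z, φ z ∈ Set.Icc (0:ℝ) 1 := fun z =>
        ⟨add_nonneg (mul_nonneg ha (hφ1 z).1) (mul_nonneg hb (hφ2 z).1),
         by
          have e1 : a * φ1 z ≤ a * 1 := mul_le_mul_of_nonneg_left (hφ1 z).2 ha
          have e2 : b * φ2 z ≤ b * 1 := mul_le_mul_of_nonneg_left (hφ2 z).2 hb
          simp only [mul_one] at e1 e2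
          show a * φ1 z + b * φ2 z ≤ 1
          linarith⟩
      have hfeas : ∑ z, p z * φ z ≤ a * x + b * y := by
        have : ∑ z, p z * φ z = a * ∑ z, p z * φ1 z + b * ∑ z, p z * φ2 z := by
          simp only [hφdef, Finset.mul_sum, ← Finset.sum_add_distrib]
          exact Finset.sum_congr rfl fun z _ => by ring
        rw [this]
        have := mul_le_mul_of_nonneg_left hle1 ha
        have := mul_le_mul_of_nonneg_left hle2 hb
        linarith
      have := tradeoff_le p q hq φ hmem hfeas
      have hq2 : ∑ z, q z * φ z = a * ∑ z, q z * φ1 z + b * ∑ z, q z * φ2 z := by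
        simp only [hφdef, Finset.mul_sum, ← Finset.sum_add_distrib]
        exact Finset.sum_congr rfl fun z _ => by ring
      rw [hq2] at this
      nlinarith
    rcases eq_or_lt_of_le ha with ha0 | ha0
    · have hb1 : b = 1 := by linarith
      simp [← ha0, hb1]
    rcases eq_or_lt_of_le hb with hb0 | hb0
    · have ha1 : a = 1 := by linarith
      simp [← hb0, ha1]
    refine le_of_forall_pos_le_add fun ε hε => ?_
    obtain ⟨β1, hβ1mem, hβ1⟩ := exists_lt_of_csInf_lt (nonempty_S p q hx.1)
      (show sInf (S p q x) < sInf (S p q x) + ε / (2 * a) by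
        have : 0 < ε / (2 * a) := by positivity
        linarith)
    obtain ⟨β2, hβ2mem, hβ2⟩ := exists_lt_of_csInf_lt (nonempty_S p q hy.1)
      (show sInf (S p q y) < sInf (S p q y) + ε / (2 * b) by
        have : 0 < ε / (2 * b) := by positivity
        linarith)
    rw [← tradeoff_eq] at hβ1 hβ2
    have h1 := hmix β1 hβ1mem β2 hβ2mem
    have e1 : a * β1 ≤ a * tradeoff p q x + ε / 2 := by
      have := mul_le_mul_of_nonneg_left hβ1.le ha0.le
      rw [mul_add] at this
      have : a * (ε / (2 * a)) = ε / 2 := by field_simp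
      nlinarith [mul_le_mul_of_nonneg_left hβ1.le ha0.le]
    have e2 : b * β2 ≤ b * tradeoff p q y + ε / 2 := by
      have : b * (ε / (2 * b)) = ε / 2 := by field_simp
      nlinarith [mul_le_mul_of_nonneg_left hβ2.le hb0.le]
    linarith
  -- antitone
  have hanti : AntitoneOn (tradeoff p q) (Set.Icc (0:ℝ) 1) := by
    intro x hx y _ hxy
    exact tradeoff_antitone p q hq hx.1 hxy
  refine ⟨hconv, ?_, hanti, ?_⟩
  · -- continuity via Lipschitz
    have hlip : LipschitzOnWith (Real.toNNReal (M p q)) (tradeoff p q)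
        (Set.Icc (0:ℝ) 1) := by
      rw [lipschitzOnWith_iff_dist_le_mul]
      intro x hx y hy
      rw [Real.dist_eq, Real.dist_eq, Real.coe_toNNReal _ hM]
      rcases le_total x y with hxy | hxy
      · have h1 := tradeoff_antitone p q hq hx.1 hxy
        have h2 := tradeoff_lip p q hp hq hx.1 hxy
        rw [abs_of_nonpos (by linarith : x - y ≤ 0)]
        rw [abs_of_nonneg (by linarith : 0 ≤ tradeoff p q x - tradeoff p q y)]
        nlinarith
      · have h1 := tradeoff_antitone p q hq hy.1 hxy
        have h2 := tradeoff_lip p q hp hq hy.1 hxy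
        rw [abs_of_nonneg (by linarith : (0:ℝ) ≤ x - y)]
        rw [abs_of_nonpos (by linarith : tradeoff p q x - tradeoff p q y ≤ 0)]
        nlinarith
    exact hlip.continuousOn
  · -- bound
    intro α hα
    have := tradeoff_le p q hq (fun _ => α) (fun _ => hα) (by
      rw [← Finset.sum_mul, hp.2, one_mul])
    rw [← Finset.sum_mul, hq.2, one_mul] at this
    exact this
end

section
/- Joint convexity of trade-off functions: Let I be a countable (or finite) index set, and for each i ∈ I let X_i and X'_i be probability distributions on a common measurable space. Let I be a random variable on the index set, and let X_I (resp. X'_I) denote the mixture distribution that samples i ∼ I and then samples from X_i (resp. X'_i). If f is a trade-off function with T(X_i, X'_i) ≥ f pointwise for all i, then T(X_I, X'_I) ≥ f pointwise. -/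
open Finset

/-- Joint convexity of trade-off functions: if `T(X_i, X'_i) ≥ f` for all `i`,
then the mixtures satisfy `T(X_I, X'_I) ≥ f`. -/
theorem tradeoff_joint_convexity {ι Ω : Type*} [Fintype ι] [Fintype Ω]
    (w : ι → ℝ) (hw : IsPMF w)
    (X X' : ι → Ω → ℝ) (hX : ∀ i, IsPMF (X i)) (hX' : ∀ i, IsPMF (X' i))
    (f : ℝ → ℝ)
    (hconv : ConvexOn ℝ (Set.Icc (0:ℝ) 1) f)
    (hcont : ContinuousOn f (Set.Icc (0:ℝ) 1))
    (hanti : AntitoneOn f (Set.Icc (0:ℝ) 1))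
    (hbound : ∀ x ∈ Set.Icc (0:ℝ) 1, f x ≤ 1 - x)
    (hf : ∀ i, ∀ α ∈ Set.Icc (0:ℝ) 1, f α ≤ tradeoff (X i) (X' i) α) :
    ∀ α ∈ Set.Icc (0:ℝ) 1,
      f α ≤ tradeoff (fun x => ∑ i, w i * X i x) (fun x => ∑ i, w i * X' i x) α := by
  intro α hα
  apply le_csInf
  · exact ⟨1, fun _ => 0, fun x => by simp [Set.mem_Icc], by simpa using hα.1, by simp⟩
  · rintro β ⟨φ, hφ, hle, rfl⟩
    set g := fun i => ∑ x, X i x * φ x with hg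
    have hgmem : ∀ i, g i ∈ Set.Icc (0:ℝ) 1 := by
      intro i
      constructor
      · exact Finset.sum_nonneg fun x _ => mul_nonneg ((hX i).1 x) (hφ x).1
      · calc ∑ x, X i x * φ x ≤ ∑ x, X i x :=
              Finset.sum_le_sum fun x _ => by nlinarith [(hX i).1 x, (hφ x).2]
          _ = 1 := (hX i).2
    have key : ∀ i, f (g i) ≤ 1 - ∑ x, X' i x * φ x := by
      intro i
      refine le_trans (hf i (g i) (hgmem i)) ?_
      apply csInf_le
      · refine ⟨0, ?_⟩
        rintro b ⟨ψ, hψ, _, rfl⟩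
        have h1 : ∑ x, X' i x * ψ x ≤ 1 := by
          calc ∑ x, X' i x * ψ x ≤ ∑ x, X' i x :=
                Finset.sum_le_sum fun x _ => by nlinarith [(hX' i).1 x, (hψ x).2]
            _ = 1 := (hX' i).2
        linarith
      · exact ⟨φ, hφ, le_refl _, rfl⟩
    have hsum : ∑ i, w i * g i ≤ α := by
      have : ∑ i, w i * g i = ∑ x, (∑ i, w i * X i x) * φ x := by
        simp_rw [hg, Finset.mul_sum, Finset.sum_mul]
        rw [Finset.sum_comm]
        apply Finset.sum_congr rfl; intro x _
        apply Finset.sum_congr rfl; intro i _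
        ring
      linarith [this ▸ hle]
    have hmean : (∑ i, w i * g i) ∈ Set.Icc (0:ℝ) 1 := by
      constructor
      · exact Finset.sum_nonneg fun i _ => mul_nonneg (hw.1 i) (hgmem i).1
      · calc ∑ i, w i * g i ≤ ∑ i, w i :=
              Finset.sum_le_sum fun i _ => by nlinarith [hw.1 i, (hgmem i).2]
          _ = 1 := hw.2
    have jensen : f (∑ i, w i * g i) ≤ ∑ i, w i * f (g i) := by
      have h := ConvexOn.map_sum_le hconv (fun i _ => hw.1 i) hw.2 (fun i _ => hgmem i)
      simpa [smul_eq_mul] using h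
    have hwsum : ∑ i, w i * f (g i) ≤ ∑ i, w i * (1 - ∑ x, X' i x * φ x) :=
      Finset.sum_le_sum fun i _ => mul_le_mul_of_nonneg_left (key i) (hw.1 i)
    have heq : ∑ i, w i * (1 - ∑ x, X' i x * φ x)
        = 1 - ∑ x, (∑ i, w i * X' i x) * φ x := by
      simp_rw [mul_sub, mul_one, Finset.sum_sub_distrib, hw.2, Finset.mul_sum, Finset.sum_mul]
      rw [Finset.sum_comm]
      congr 1
      apply Finset.sum_congr rfl; intro x _
      apply Finset.sum_congr rfl; intro i _
      ring
    have hanti' : f α ≤ f (∑ i, w i * g i) := hanti hmean hα hsum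
    linarith
end

section
/- The trade-off function of a mixture against two indexed families: for any measurable rejection rule φ and mixture distributions X_I, X'_I as above, if f is convex and non-increasing and 1 - E[φ(X'_i)] ≥ f(E[φ(X_i)]) for each i, then 1 - E[φ(X'_I)] ≥ f(E[φ(X_I)]). -/
open Finset

/-- Key step of joint convexity of `f`-DP: if a rejection rule `φ` satisfies
`1 - E[φ(X'_i)] ≥ f(E[φ(X_i)])` for each `i`, and `f` is convex and non-increasing,
then the same inequality holds for the mixtures `X_I`, `X'_I`. -/
theorem tradeoff_mixture_rule {ι Ω : Type*} [Fintype ι] [Fintype Ω]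
    (w : ι → ℝ) (hw : IsPMF w)
    (X X' : ι → Ω → ℝ) (hX : ∀ i, IsPMF (X i)) (hX' : ∀ i, IsPMF (X' i))
    (φ : Ω → ℝ) (hφ : ∀ x, φ x ∈ Set.Icc (0:ℝ) 1)
    (f : ℝ → ℝ)
    (hconv : ConvexOn ℝ (Set.Icc (0:ℝ) 1) f)
    (hanti : AntitoneOn f (Set.Icc (0:ℝ) 1))
    (h : ∀ i, f (∑ x, X i x * φ x) ≤ 1 - ∑ x, X' i x * φ x) :
    f (∑ x, (∑ i, w i * X i x) * φ x) ≤ 1 - ∑ x, (∑ i, w i * X' i x) * φ x := by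
  have hmem : ∀ i, (∑ x, X i x * φ x) ∈ Set.Icc (0:ℝ) 1 := by
    intro i
    constructor
    · exact Finset.sum_nonneg fun x _ => mul_nonneg ((hX i).1 x) (hφ x).1
    · calc ∑ x, X i x * φ x ≤ ∑ x, X i x :=
            Finset.sum_le_sum fun x _ => by
              nlinarith [(hX i).1 x, (hφ x).1, (hφ x).2]
        _ = 1 := (hX i).2
  have key : f (∑ i, w i * (∑ x, X i x * φ x)) ≤ ∑ i, w i * f (∑ x, X i x * φ x) :=
    hconv.map_sum_le (fun i _ => hw.1 i) hw.2 (fun i _ => hmem i)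
  have e1 : ∑ x, (∑ i, w i * X i x) * φ x = ∑ i, w i * (∑ x, X i x * φ x) := by
    simp only [Finset.sum_mul, Finset.mul_sum, mul_assoc]
    exact Finset.sum_comm
  have e2 : ∑ x, (∑ i, w i * X' i x) * φ x = ∑ i, w i * (∑ x, X' i x * φ x) := by
    simp only [Finset.sum_mul, Finset.mul_sum, mul_assoc]
    exact Finset.sum_comm
  rw [e1, e2]
  calc f (∑ i, w i * (∑ x, X i x * φ x)) ≤ ∑ i, w i * f (∑ x, X i x * φ x) := key
    _ ≤ ∑ i, w i * (1 - ∑ x, X' i x * φ x) :=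
        Finset.sum_le_sum fun i _ => mul_le_mul_of_nonneg_left (h i) (hw.1 i)
    _ = 1 - ∑ i, w i * (∑ x, X' i x * φ x) := by
        simp [mul_sub, Finset.sum_sub_distrib, hw.2]
end

section
/- Upper bound part of completeness: Let S be a nonempty set of trade-off functions and h' a trade-off function with f ⪯ h' for all f ∈ S (i.e., h'(α) ≤ f(α) pointwise for all f ∈ S). Then for every random variable F supported on S and every A : S → [0,1] with E[A(F)] ≤ α, one has h'(α) ≤ E[F(A(F))]. Consequently h'(α) ≤ h(α) where h(α) = inf_{F,A} {E[F(A(F))] : E[A(F)] ≤ α}. -/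
open Finset

def IsTradeoffFun (f : ℝ → ℝ) : Prop :=
  ConvexOn ℝ (Set.Icc (0:ℝ) 1) f ∧
  ContinuousOn f (Set.Icc (0:ℝ) 1) ∧
  AntitoneOn f (Set.Icc (0:ℝ) 1) ∧
  ∀ x ∈ Set.Icc (0:ℝ) 1, 0 ≤ f x ∧ f x ≤ 1 - x

noncomputable def supCandidate (S : Set (ℝ → ℝ)) (α : ℝ) : ℝ :=
  sInf { v | ∃ (n : ℕ) (w : Fin n → ℝ) (g : Fin n → (ℝ → ℝ)) (a : Fin n → ℝ),
    (∀ i, 0 ≤ w i) ∧ (∑ i, w i) = 1 ∧ (∀ i, g i ∈ S) ∧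
    (∀ i, a i ∈ Set.Icc (0:ℝ) 1) ∧ (∑ i, w i * a i) ≤ α ∧
    v = ∑ i, w i * g i (a i) }

/-- Upper bound part of completeness: if `h'` is a trade-off function with
`f ⪯ h'` for all `f ∈ S` (i.e. `h' ≤ f` pointwise), then for every finitely supported
random variable `F` on `S` (weights `w`, values `g`) and every `A : S → [0,1]`
(values `a`) with `E[A(F)] ≤ α`, we have `h'(α) ≤ E[F(A(F))]`; consequently
`h'(α) ≤ h(α) = supCandidate S α`. -/
theorem tradeoff_sup_upper_bound (S : Set (ℝ → ℝ)) (hS : S.Nonempty)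
    (hSto : ∀ f ∈ S, IsTradeoffFun f)
    (h' : ℝ → ℝ) (hh' : IsTradeoffFun h')
    (hub : ∀ f ∈ S, ∀ x ∈ Set.Icc (0:ℝ) 1, h' x ≤ f x)
    (α : ℝ) (hα : α ∈ Set.Icc (0:ℝ) 1) :
    (∀ (n : ℕ) (w : Fin n → ℝ) (g : Fin n → (ℝ → ℝ)) (a : Fin n → ℝ),
      (∀ i, 0 ≤ w i) → (∑ i, w i) = 1 → (∀ i, g i ∈ S) →
      (∀ i, a i ∈ Set.Icc (0:ℝ) 1) → (∑ i, w i * a i) ≤ α →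
      h' α ≤ ∑ i, w i * g i (a i)) ∧
    h' α ≤ supCandidate S α := by
  have key : ∀ (n : ℕ) (w : Fin n → ℝ) (g : Fin n → (ℝ → ℝ)) (a : Fin n → ℝ),
      (∀ i, 0 ≤ w i) → (∑ i, w i) = 1 → (∀ i, g i ∈ S) →
      (∀ i, a i ∈ Set.Icc (0:ℝ) 1) → (∑ i, w i * a i) ≤ α →
      h' α ≤ ∑ i, w i * g i (a i) := by
    intro n w g a hw hw1 hgS ha hle
    have hmean : (∑ i, w i * a i) ∈ Set.Icc (0:ℝ) 1 := by
      constructor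
      · exact Finset.sum_nonneg fun i _ => mul_nonneg (hw i) (ha i).1
      · exact hle.trans hα.2
    have h1 : h' α ≤ h' (∑ i, w i * a i) := hh'.2.2.1 hmean hα hle
    have h2 : h' (∑ i, w i * a i) ≤ ∑ i, w i * h' (a i) := by
      have := hh'.1.map_sum_le (t := Finset.univ) (fun i _ => hw i)
        (by simpa using hw1) (fun i _ => ha i)
      simpa [smul_eq_mul] using this
    have h3 : ∑ i, w i * h' (a i) ≤ ∑ i, w i * g i (a i) :=
      Finset.sum_le_sum fun i _ =>
        mul_le_mul_of_nonneg_left (hub (g i) (hgS i) (a i) (ha i)) (hw i)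
    linarith
  refine ⟨key, ?_⟩
  obtain ⟨f, hf⟩ := hS
  apply le_csInf
  · exact ⟨f α, 1, (fun _ => 1), (fun _ => f), (fun _ => α),
      fun i => zero_le_one, by simp, fun i => hf, fun i => hα, by simp, by simp⟩
  · rintro v ⟨n, w, g, a, hw, hw1, hgS, ha, hle, rfl⟩
    exact key n w g a hw hw1 hgS ha hle
end

section
/- Post-processing (data-processing) inequality for trade-off functions: for probability distributions P, Q on a space X and any Markov kernel (randomized algorithm) K : X → Y, the trade-off function satisfies T(K(P), K(Q))(α) ≥ T(P,Q)(α) for all α ∈ [0,1], where K(P) denotes the pushforward of P under K. -/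
open Finset

/-- A Markov kernel (randomized algorithm) from `X` to `Y`. -/
def IsKernel {X Y : Type*} [Fintype X] [Fintype Y] (K : X → Y → ℝ) : Prop :=
  ∀ x, IsPMF (K x)

/-- The pushforward `K(P)` of a distribution `P` under a Markov kernel `K`. -/
def push {X Y : Type*} [Fintype X] [Fintype Y] (K : X → Y → ℝ) (p : X → ℝ) : Y → ℝ :=
  fun y => ∑ x, p x * K x y

/-- Post-processing (data-processing) inequality for trade-off functions:
`T(K(P), K(Q))(α) ≥ T(P,Q)(α)` for every Markov kernel `K`. -/
theorem tradeoff_post_processing {X Y : Type*} [Fintype X] [Fintype Y]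
    (p q : X → ℝ) (hp : IsPMF p) (hq : IsPMF q)
    (K : X → Y → ℝ) (hK : IsKernel K) :
    ∀ α ∈ Set.Icc (0:ℝ) 1, tradeoff p q α ≤ tradeoff (push K p) (push K q) α := by
  intro α hα
  unfold tradeoff
  -- the set for (p,q) is bounded below by 0
  have hbdd : BddBelow { β | ∃ φ : X → ℝ, (∀ x, φ x ∈ Set.Icc (0:ℝ) 1) ∧
      (∑ x, p x * φ x) ≤ α ∧ β = 1 - ∑ x, q x * φ x } := by
    refine ⟨0, ?_⟩
    rintro β ⟨φ, hφ, _, rfl⟩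
    have h1 : ∑ x, q x * φ x ≤ ∑ x, q x := by
      apply Finset.sum_le_sum
      intro x _
      calc q x * φ x ≤ q x * 1 :=
        mul_le_mul_of_nonneg_left (hφ x).2 (hq.1 x)
      _ = q x := mul_one _
    rw [hq.2] at h1
    linarith
  -- nonemptiness of the pushed set (φ = 0)
  have hne : { β | ∃ φ : Y → ℝ, (∀ y, φ y ∈ Set.Icc (0:ℝ) 1) ∧
      (∑ y, push K p y * φ y) ≤ α ∧ β = 1 - ∑ y, push K q y * φ y }.Nonempty := by
    refine ⟨1, fun _ => 0, fun y => ⟨le_refl _, zero_le_one⟩, ?_, ?_⟩ <;> simp [hα.1]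
  refine le_csInf hne ?_
  rintro β ⟨φ, hφ, hsum, rfl⟩
  apply csInf_le hbdd
  refine ⟨fun x => ∑ y, K x y * φ y, ?_, ?_, ?_⟩
  · intro x
    constructor
    · exact Finset.sum_nonneg fun y _ => mul_nonneg ((hK x).1 y) (hφ y).1
    · calc ∑ y, K x y * φ y ≤ ∑ y, K x y :=
          Finset.sum_le_sum fun y _ => by
            have := mul_le_mul_of_nonneg_left (hφ y).2 ((hK x).1 y)
            simpa using this
        _ = 1 := (hK x).2
  · calc ∑ x, p x * ∑ y, K x y * φ y
        = ∑ y, push K p y * φ y := by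
          simp only [push, Finset.sum_mul, Finset.mul_sum]
          rw [Finset.sum_comm]
          ring_nf
      _ ≤ α := hsum
  · congr 1
    calc ∑ y, push K q y * φ y
        = ∑ x, q x * ∑ y, K x y * φ y := by
          simp only [push, Finset.sum_mul, Finset.mul_sum]
          rw [Finset.sum_comm]
          ring_nf
end

section
/- Coupling property of f-DP: let f be a trade-off function and X, X', Y, Y' random variables with T(X,X') ≥ f and T(Y,Y') ≥ f pointwise. Assume (Blackwell's theorem) that whenever T(P,P') ≤ T(X,X') there is a Markov kernel K with K(P) = X and K(P') = X' in distribution, and that f = T(P,P') for some pair (P,P'). Then there exist a coupling (X̃,Ỹ) of X and Y and a coupling (X̃',Ỹ') of X' and Y' such that T((X̃,Ỹ),(X̃',Ỹ')) ≥ f pointwise. -/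
open Finset

lemma swap_sum {Ω Ω' : Type*} [Fintype Ω] [Fintype Ω'] (p : Ω → ℝ) (K : Ω → Ω' → ℝ)
    (φ : Ω' → ℝ) : ∑ x, p x * ∑ y, K x y * φ y = ∑ y, push K p y * φ y := by
  simp only [push, Finset.mul_sum, Finset.sum_mul]
  rw [Finset.sum_comm]
  exact Finset.sum_congr rfl fun x _ => Finset.sum_congr rfl fun y _ => (mul_assoc _ _ _).symm

lemma isPMF_push {Ω Ω' : Type*} [Fintype Ω] [Fintype Ω'] {p : Ω → ℝ} (hp : IsPMF p)
    {K : Ω → Ω' → ℝ} (hK : IsKernel K) : IsPMF (push K p) := by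
  constructor
  · exact fun y => Finset.sum_nonneg fun x _ => mul_nonneg (hp.1 x) ((hK x).1 y)
  · calc ∑ y, push K p y = ∑ x, ∑ y, p x * K x y := Finset.sum_comm
      _ = ∑ x, p x := Finset.sum_congr rfl fun x _ => by
          rw [← Finset.mul_sum, (hK x).2, mul_one]
      _ = 1 := hp.2

/-- Data-processing inequality for the trade-off function. -/
lemma tradeoff_push_le {Ω Ω' : Type*} [Fintype Ω] [Fintype Ω'] (p q : Ω → ℝ)
    (hq : IsPMF q) (K : Ω → Ω' → ℝ) (hK : IsKernel K)
    (α : ℝ) (hα : 0 ≤ α) :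
    tradeoff p q α ≤ tradeoff (push K p) (push K q) α := by
  apply csInf_le_csInf
  · refine ⟨0, ?_⟩
    rintro β ⟨φ, hφ, -, rfl⟩
    have h1 : ∑ x, q x * φ x ≤ 1 := by
      calc ∑ x, q x * φ x ≤ ∑ x, q x * 1 :=
            Finset.sum_le_sum fun x _ => mul_le_mul_of_nonneg_left (hφ x).2 (hq.1 x)
        _ = 1 := by simpa using hq.2
    show (0:ℝ) ≤ 1 - ∑ x, q x * φ x
    linarith
  · exact ⟨1, fun _ => 0, fun x => by norm_num [Set.mem_Icc], by simpa using hα, by simp⟩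
  · rintro β ⟨φ, hφ, hle, rfl⟩
    refine ⟨fun x => ∑ y, K x y * φ y, fun x => ⟨?_, ?_⟩, ?_, ?_⟩
    · exact Finset.sum_nonneg fun y _ => mul_nonneg ((hK x).1 y) (hφ y).1
    · calc ∑ y, K x y * φ y ≤ ∑ y, K x y * 1 :=
            Finset.sum_le_sum fun y _ => mul_le_mul_of_nonneg_left (hφ y).2 ((hK x).1 y)
        _ = 1 := by simpa using (hK x).2
    · show ∑ x, p x * ∑ y, K x y * φ y ≤ α
      rw [swap_sum]; exact hle
    · show (1:ℝ) - ∑ y, push K q y * φ y = 1 - ∑ x, q x * ∑ y, K x y * φ y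
      rw [swap_sum]

/-- Coupling property of `f`-DP: if `T(X,X') ≥ f` and `T(Y,Y') ≥ f`, where
`f = T(P,P')` is realized by the pair `(P,P')`, and Blackwell's theorem is assumed
(whenever `T(P,P') ≤ T(X,X')` there is a kernel carrying `(P,P')` to `(X,X')`, and
likewise for `(Y,Y')`), then there are couplings `(X̃,Ỹ)` of `X,Y` and `(X̃',Ỹ')` of
`X',Y'` with `T((X̃,Ỹ),(X̃',Ỹ')) ≥ f`. -/
theorem fDP_coupling {ΩX ΩY ΩP : Type*} [Fintype ΩX] [Fintype ΩY] [Fintype ΩP]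
    (f : ℝ → ℝ)
    (X X' : ΩX → ℝ) (hX : IsPMF X) (hX' : IsPMF X')
    (Y Y' : ΩY → ℝ) (hY : IsPMF Y) (hY' : IsPMF Y')
    (P P' : ΩP → ℝ) (hP : IsPMF P) (hP' : IsPMF P')
    -- `f` is realized as the trade-off function of the pair `(P, P')`
    (hfP : ∀ α ∈ Set.Icc (0:ℝ) 1, f α = tradeoff P P' α)
    -- `T(X,X') ≥ f` and `T(Y,Y') ≥ f`
    (hfX : ∀ α ∈ Set.Icc (0:ℝ) 1, f α ≤ tradeoff X X' α)
    (hfY : ∀ α ∈ Set.Icc (0:ℝ) 1, f α ≤ tradeoff Y Y' α)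
    -- Blackwell's theorem, assumed for the two relevant pairs
    (hBlackwellX : (∀ α ∈ Set.Icc (0:ℝ) 1, tradeoff P P' α ≤ tradeoff X X' α) →
      ∃ K : ΩP → ΩX → ℝ, IsKernel K ∧ push K P = X ∧ push K P' = X')
    (hBlackwellY : (∀ α ∈ Set.Icc (0:ℝ) 1, tradeoff P P' α ≤ tradeoff Y Y' α) →
      ∃ K : ΩP → ΩY → ℝ, IsKernel K ∧ push K P = Y ∧ push K P' = Y') :
    ∃ W W' : ΩX × ΩY → ℝ, IsPMF W ∧ IsPMF W' ∧
      -- `W` is a coupling of `X` and `Y`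
      (∀ x, ∑ y, W (x, y) = X x) ∧ (∀ y, ∑ x, W (x, y) = Y y) ∧
      -- `W'` is a coupling of `X'` and `Y'`
      (∀ x, ∑ y, W' (x, y) = X' x) ∧ (∀ y, ∑ x, W' (x, y) = Y' y) ∧
      -- `T((X̃,Ỹ), (X̃',Ỹ')) ≥ f`
      (∀ α ∈ Set.Icc (0:ℝ) 1, f α ≤ tradeoff W W' α) := by
  obtain ⟨KX, hKX, hKXP, hKXP'⟩ := hBlackwellX (fun α hα => (hfP α hα) ▸ hfX α hα)
  obtain ⟨KY, hKY, hKYP, hKYP'⟩ := hBlackwellY (fun α hα => (hfP α hα) ▸ hfY α hα)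
  set K : ΩP → ΩX × ΩY → ℝ := fun p z => KX p z.1 * KY p z.2 with hKdef
  have hK : IsKernel K := by
    intro p
    constructor
    · exact fun z => mul_nonneg ((hKX p).1 z.1) ((hKY p).1 z.2)
    · rw [Fintype.sum_prod_type]
      calc ∑ x, ∑ y, K p (x, y) = ∑ x, KX p x := Finset.sum_congr rfl fun x _ => by
            simp only [hKdef, ← Finset.mul_sum, (hKY p).2, mul_one]
        _ = 1 := (hKX p).2
  have hmarg1 : ∀ (Q : ΩP → ℝ) (x : ΩX), ∑ y, push K Q (x, y) = push KX Q x := by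
    intro Q x
    calc ∑ y, ∑ p, Q p * K p (x, y) = ∑ p, ∑ y, Q p * (KX p x * KY p y) := Finset.sum_comm
      _ = ∑ p, Q p * KX p x := Finset.sum_congr rfl fun p _ => by
          rw [← Finset.mul_sum, ← Finset.mul_sum, (hKY p).2, mul_one]
  have hmarg2 : ∀ (Q : ΩP → ℝ) (y : ΩY), ∑ x, push K Q (x, y) = push KY Q y := by
    intro Q y
    calc ∑ x, ∑ p, Q p * K p (x, y) = ∑ p, ∑ x, Q p * (KX p x * KY p y) := Finset.sum_comm
      _ = ∑ p, Q p * KY p y := Finset.sum_congr rfl fun p _ => by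
          rw [← Finset.mul_sum, ← Finset.sum_mul, (hKX p).2, one_mul]
  refine ⟨push K P, push K P', isPMF_push hP hK, isPMF_push hP' hK,
    fun x => by rw [hmarg1 P x, hKXP], fun y => by rw [hmarg2 P y, hKYP],
    fun x => by rw [hmarg1 P' x, hKXP'], fun y => by rw [hmarg2 P' y, hKYP'],
    fun α hα => ?_⟩
  rw [hfP α hα]
  exact tradeoff_push_le P P' hP' K hK α hα.1
end

section
/- Chain rule for trade-off functions (finite support): let X, X' be discrete random variables with finite support, and let Y (resp. Y') be jointly distributed with X (resp. X'). Suppose supp(X) = supp(X'). Then T((X,Y),(X',Y'))(α) = inf over families (α_x)_{x} with α_x ∈ [0,1] and E_{x∼X}[α_x] ≤ α of E_{x∼X'}[f_x(α_x)], where f_x = T(Y|_{X=x}, Y'|_{X'=x}). -/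
open Finset

lemma tradeoffSet_bddBelow {Ω : Type*} [Fintype Ω] (p q : Ω → ℝ) (hq : IsPMF q) (α : ℝ) :
    BddBelow { β | ∃ φ : Ω → ℝ, (∀ x, φ x ∈ Set.Icc (0:ℝ) 1) ∧
      (∑ x, p x * φ x) ≤ α ∧ β = 1 - ∑ x, q x * φ x } := by
  refine ⟨0, ?_⟩
  rintro β ⟨φ, hφ, -, rfl⟩
  have h : ∑ x, q x * φ x ≤ ∑ x, q x := by
    apply Finset.sum_le_sum
    intro i _
    nlinarith [hq.1 i, (hφ i).1, (hφ i).2]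
  rw [hq.2] at h
  linarith

lemma tradeoffSet_nonempty {Ω : Type*} [Fintype Ω] (p q : Ω → ℝ) {α : ℝ} (hα : 0 ≤ α) :
    Set.Nonempty { β | ∃ φ : Ω → ℝ, (∀ x, φ x ∈ Set.Icc (0:ℝ) 1) ∧
      (∑ x, p x * φ x) ≤ α ∧ β = 1 - ∑ x, q x * φ x } := by
  refine ⟨1, fun _ => 0, fun x => ⟨le_refl _, zero_le_one⟩, ?_, ?_⟩ <;> simp [hα]

lemma tradeoff_le {Ω : Type*} [Fintype Ω] (p q : Ω → ℝ) (hq : IsPMF q) (α : ℝ)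
    (φ : Ω → ℝ) (hφ : ∀ x, φ x ∈ Set.Icc (0:ℝ) 1) (hsum : (∑ x, p x * φ x) ≤ α) :
    tradeoff p q α ≤ 1 - ∑ x, q x * φ x :=
  csInf_le (tradeoffSet_bddBelow p q hq α) ⟨φ, hφ, hsum, rfl⟩

/-- Chain rule for trade-off functions (finite support): for joint distributions
given by marginals `pX, pX'` (with equal support) and conditional kernels `kY, kY'`,
`T((X,Y),(X',Y'))(α) = inf { E_{x∼X'}[f_x(α_x)] : α_x ∈ [0,1], E_{x∼X}[α_x] ≤ α }`,
where `f_x = T(Y|_{X=x}, Y'|_{X'=x})`. -/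
theorem tradeoff_chain_rule {𝒳 𝒴 : Type*} [Fintype 𝒳] [Fintype 𝒴]
    (pX pX' : 𝒳 → ℝ) (hX : IsPMF pX) (hX' : IsPMF pX')
    (hsupp : ∀ x, pX x ≠ 0 ↔ pX' x ≠ 0)
    (kY kY' : 𝒳 → 𝒴 → ℝ) (hkY : ∀ x, IsPMF (kY x)) (hkY' : ∀ x, IsPMF (kY' x))
    (α : ℝ) (hα : α ∈ Set.Icc (0:ℝ) 1) :
    tradeoff (fun p : 𝒳 × 𝒴 => pX p.1 * kY p.1 p.2)
             (fun p : 𝒳 × 𝒴 => pX' p.1 * kY' p.1 p.2) α =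
      sInf { v | ∃ a : 𝒳 → ℝ, (∀ x, a x ∈ Set.Icc (0:ℝ) 1) ∧
        (∑ x, pX x * a x) ≤ α ∧
        v = ∑ x, pX' x * tradeoff (kY x) (kY' x) (a x) } := by
  obtain ⟨hα0, hα1⟩ := hα
  have hQpmf : IsPMF (fun p : 𝒳 × 𝒴 => pX' p.1 * kY' p.1 p.2) := by
    constructor
    · intro p; exact mul_nonneg (hX'.1 p.1) ((hkY' p.1).1 p.2)
    · rw [Fintype.sum_prod_type]
      simp only [← Finset.mul_sum]
      simp only [fun x => (hkY' x).2, mul_one]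
      exact hX'.2
  apply le_antisymm
  · -- L ≤ R
    apply le_csInf
    · exact ⟨∑ x, pX' x * tradeoff (kY x) (kY' x) α, fun _ => α,
        fun x => ⟨hα0, hα1⟩, by simp only [← Finset.sum_mul, hX.2, one_mul, le_refl], rfl⟩
    rintro v ⟨a, ha, hsum, rfl⟩
    apply le_of_forall_pos_le_add
    intro ε hε
    -- pick near-optimal φ_x for each x
    have hchoice : ∀ x : 𝒳, ∃ φx : 𝒴 → ℝ, (∀ y, φx y ∈ Set.Icc (0:ℝ) 1) ∧
        (∑ y, kY x y * φx y) ≤ a x ∧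
        1 - ∑ y, kY' x y * φx y < tradeoff (kY x) (kY' x) (a x) + ε := by
      intro x
      obtain ⟨β, ⟨φx, hφx, hfs, rfl⟩, hlt⟩ :=
        Real.lt_sInf_add_pos (tradeoffSet_nonempty (kY x) (kY' x) (ha x).1) hε
      exact ⟨φx, hφx, hfs, hlt⟩
    choose φ hφmem hφfeas hφval using hchoice
    set Φ : 𝒳 × 𝒴 → ℝ := fun p => φ p.1 p.2 with hΦ
    have hfeas : (∑ p : 𝒳 × 𝒴, (pX p.1 * kY p.1 p.2) * Φ p) ≤ α := by
      rw [Fintype.sum_prod_type]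
      simp only [hΦ, mul_assoc, ← Finset.mul_sum]
      calc ∑ x, pX x * ∑ y, kY x y * φ x y ≤ ∑ x, pX x * a x := by
            apply Finset.sum_le_sum
            intro i _
            exact mul_le_mul_of_nonneg_left (hφfeas i) (hX.1 i)
        _ ≤ α := hsum
    have hle := tradeoff_le _ _ hQpmf α Φ (fun p => hφmem p.1 p.2) hfeas
    refine hle.trans ?_
    have hval : 1 - ∑ p : 𝒳 × 𝒴, pX' p.1 * kY' p.1 p.2 * Φ p
        = ∑ x, pX' x * (1 - ∑ y, kY' x y * φ x y) := by
      rw [Fintype.sum_prod_type]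
      simp only [hΦ, mul_assoc, ← Finset.mul_sum, mul_sub, mul_one,
        Finset.sum_sub_distrib, hX'.2]
    rw [hval]
    have := Finset.sum_le_sum (s := Finset.univ) (f := fun x => pX' x * (1 - ∑ y, kY' x y * φ x y))
      (g := fun x => pX' x * (tradeoff (kY x) (kY' x) (a x) + ε))
      (fun i _ => mul_le_mul_of_nonneg_left (le_of_lt (hφval i)) (hX'.1 i))
    refine this.trans ?_
    simp only [mul_add, Finset.sum_add_distrib, ← Finset.sum_mul, hX'.2, one_mul, le_refl]
  · -- R ≤ L
    apply le_csInf (tradeoffSet_nonempty _ _ hα0)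
    rintro β ⟨Φ, hΦ, hfeas, rfl⟩
    set a : 𝒳 → ℝ := fun x => ∑ y, kY x y * Φ (x, y) with ha
    have haIcc : ∀ x, a x ∈ Set.Icc (0:ℝ) 1 := by
      intro x
      constructor
      · exact Finset.sum_nonneg fun y _ => mul_nonneg ((hkY x).1 y) (hΦ (x, y)).1
      · calc ∑ y, kY x y * Φ (x, y) ≤ ∑ y, kY x y := by
              apply Finset.sum_le_sum
              intro y _
              nlinarith [(hkY x).1 y, (hΦ (x, y)).1, (hΦ (x, y)).2]
          _ = 1 := (hkY x).2
    have hasum : (∑ x, pX x * a x) ≤ α := by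
      refine le_trans (le_of_eq ?_) hfeas
      rw [Fintype.sum_prod_type]
      simp only [ha, mul_assoc, Finset.mul_sum]
    have hmem : (∑ x, pX' x * tradeoff (kY x) (kY' x) (a x)) ∈
        { v | ∃ a : 𝒳 → ℝ, (∀ x, a x ∈ Set.Icc (0:ℝ) 1) ∧
          (∑ x, pX x * a x) ≤ α ∧
          v = ∑ x, pX' x * tradeoff (kY x) (kY' x) (a x) } := ⟨a, haIcc, hasum, rfl⟩
    refine le_trans (csInf_le ?_ hmem) ?_
    · -- BddBelow of the RHS set, by 0
      refine ⟨0, ?_⟩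
      rintro v ⟨b, hb, -, rfl⟩
      apply Finset.sum_nonneg
      intro i _
      refine mul_nonneg (hX'.1 i) ?_
      apply le_csInf (tradeoffSet_nonempty (kY i) (kY' i) (hb i).1)
      rintro β ⟨ψ, hψ, -, rfl⟩
      have h : ∑ y, kY' i y * ψ y ≤ ∑ y, kY' i y := by
        apply Finset.sum_le_sum
        intro y _
        nlinarith [(hkY' i).1 y, (hψ y).1, (hψ y).2]
      rw [(hkY' i).2] at h
      linarith
    · -- Σ pX' f_x(a x) ≤ β
      have hperx : ∀ x, tradeoff (kY x) (kY' x) (a x) ≤ 1 - ∑ y, kY' x y * Φ (x, y) :=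
        fun x => tradeoff_le (kY x) (kY' x) (hkY' x) (a x) (fun y => Φ (x, y))
          (fun y => hΦ (x, y)) (le_refl _)
      have hval : 1 - ∑ p : 𝒳 × 𝒴, pX' p.1 * kY' p.1 p.2 * Φ p
          = ∑ x, pX' x * (1 - ∑ y, kY' x y * Φ (x, y)) := by
        rw [Fintype.sum_prod_type]
        simp only [mul_assoc, ← Finset.mul_sum, mul_sub, mul_one,
          Finset.sum_sub_distrib, hX'.2]
      rw [hval]
      exact Finset.sum_le_sum fun i _ => mul_le_mul_of_nonneg_left (hperx i) (hX'.1 i)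
end

section
/- Deterministic adversaries suffice for d-𝒟 DP: let (𝒟, ⪯, D) be a generalized probability distance satisfying joint convexity (if D(X_i, X'_i) ⪯ d for all i ∈ ℐ and I is a random variable on ℐ, then D(X_I, X'_I) ⪯ d, where X_I is the mixture). If for every deterministic adversary B and every pair of neighboring datasets x, x' we have D(View(B ↔ M(x)), View(B ↔ M(x'))) ⪯ d, then the same holds for every randomized adversary B, i.e., M is d-𝒟 DP. -/
open Finset

/-- The view distribution (on coins × views) of the deterministic adversary with
fixed coins `r`: a point mass at `r` on the first coordinate, paired with the view
distribution `v` of the interaction. -/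
def detViewDist {R V : Type*} [Fintype R] [Fintype V] [DecidableEq R]
    (r : R) (v : V → ℝ) : R × V → ℝ :=
  fun p => (if p.1 = r then 1 else 0) * v p.2

/-- Deterministic adversaries suffice for `d`-`𝒟` DP: let `(𝒟, ⪯, D)` be a
generalized probability distance (on distributions over coin–view pairs)
satisfying joint convexity.  If for every deterministic adversary (coin value `r`)
and neighboring `x, x'` the views are `d`-close, then for every randomized
adversary (coin distribution `w`) the views `(R, View(B_R ↔ M(x)))` are `d`-close. -/
theorem deterministic_adversaries_suffice
    {X : Type*} (Neighbor : X → X → Prop)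
    {R V : Type*} [Fintype R] [Fintype V] [DecidableEq R]
    {𝒟 : Type*} [PartialOrder 𝒟]
    (D : (R × V → ℝ) → (R × V → ℝ) → 𝒟) (d : 𝒟)
    -- `view x r` is the distribution of `View(B_r ↔ M(x))` for the deterministic
    -- adversary `B_r` obtained by fixing the coins to `r`
    (view : X → R → (V → ℝ)) (hview : ∀ x r, IsPMF (view x r))
    -- joint convexity of the generalized distance `D`
    (hjc : ∀ w : R → ℝ, IsPMF w →
      ∀ Y Y' : R → (R × V → ℝ), (∀ r, D (Y r) (Y' r) ≤ d) →
        D (fun p => ∑ r, w r * Y r p) (fun p => ∑ r, w r * Y' r p) ≤ d)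
    -- privacy against every deterministic adversary
    (hdet : ∀ x x', Neighbor x x' → ∀ r : R,
      D (detViewDist r (view x r)) (detViewDist r (view x' r)) ≤ d) :
    -- privacy against every randomized adversary: its view is `(R, View(B_R ↔ M(x)))`
    ∀ x x', Neighbor x x' → ∀ w : R → ℝ, IsPMF w →
      D (fun p => w p.1 * view x p.1 p.2) (fun p => w p.1 * view x' p.1 p.2) ≤ d := by
  intro x x' hn w hw
  have key : ∀ y : X, (fun p : R × V => ∑ r, w r * detViewDist r (view y r) p)
      = fun p => w p.1 * view y p.1 p.2 := by
    intro y
    funext p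
    simp only [detViewDist]
    rw [Finset.sum_eq_single p.1]
    · simp
    · intro b _ hb
      simp [Ne.symm hb]
    · simp
  have := hjc w hw (fun r => detViewDist r (view x r)) (fun r => detViewDist r (view x' r))
    (hdet x x' hn)
  rwa [key x, key x'] at this
end
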